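/- Let a, b be integers and let p₁, p₂, p₃, p₄ be distinct primes, all greater than 3, such that: p₁ divides both a−1 and b²+b+1; p₂ divides both b−1 and a²+a+1; p₃ divides both b−a and a²+a+1; and p₄ divides both b−a² and a²+a+1. Then gcd(a^m − b^n, p₁·p₂·p₃·p₄) > 1 for all integers m, n ≥ 0. -/

import Mathlib

private lemma pow_mod3 {M : Type*} [Monoid M] (x : M) (h : x ^ 3 = 1) (n : ℕ) :
    x ^ n = x ^ (n % 3) := by
  conv_lhs => rw [← Nat.div_add_mod n 3]
  rw [pow_add, pow_mul, h, one_pow, one_mul]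

private lemma key_dvd (p : ℕ) (a b : ℤ) (k : ℕ) (hab : (p : ℤ) ∣ b - a ^ k)
    (h3 : (p : ℤ) ∣ a ^ 2 + a + 1) (m n : ℕ) (h : m % 3 = (k * n) % 3) :
    (p : ℤ) ∣ a ^ m - b ^ n := by
  have hA : ((a : ZMod p) ^ 2 + (a : ZMod p) + 1) = 0 := by
    have := (ZMod.intCast_zmod_eq_zero_iff_dvd _ p).2 h3
    push_cast at this
    linear_combination this
  have hB : (b : ZMod p) = (a : ZMod p) ^ k := by
    have := (ZMod.intCast_zmod_eq_zero_iff_dvd _ p).2 hab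
    push_cast at this
    exact sub_eq_zero.mp this
  have h3' : (a : ZMod p) ^ 3 = 1 := by
    have : ((a : ZMod p) ^ 3 - 1) = ((a : ZMod p) - 1) * ((a : ZMod p) ^ 2 + (a : ZMod p) + 1) := by
      ring
    rw [hA, mul_zero] at this
    exact sub_eq_zero.mp this
  rw [← ZMod.intCast_zmod_eq_zero_iff_dvd]
  push_cast
  rw [hB, ← pow_mul, pow_mod3 _ h3' m, pow_mod3 _ h3' (k * n), h, sub_self]

/-- If `p₁, p₂, p₃, p₄` are distinct primes `> 3` with `p₁ ∣ (a-1, b²+b+1)`,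
`p₂ ∣ (b-1, a²+a+1)`, `p₃ ∣ (b-a, a²+a+1)` and `p₄ ∣ (b-a², a²+a+1)`, then
`gcd(a^m - b^n, p₁p₂p₃p₄) > 1` for all integers `m, n ≥ 0`. -/
theorem covering_example_mod_three
    (a b : ℤ) (p₁ p₂ p₃ p₄ : ℕ)
    (hp₁ : p₁.Prime) (hp₂ : p₂.Prime) (hp₃ : p₃.Prime) (hp₄ : p₄.Prime)
    (hg₁ : 3 < p₁) (hg₂ : 3 < p₂) (hg₃ : 3 < p₃) (hg₄ : 3 < p₄)
    (h12 : p₁ ≠ p₂) (h13 : p₁ ≠ p₃) (h14 : p₁ ≠ p₄)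
    (h23 : p₂ ≠ p₃) (h24 : p₂ ≠ p₄) (h34 : p₃ ≠ p₄)
    (hd₁ : (p₁ : ℤ) ∣ a - 1) (hd₁' : (p₁ : ℤ) ∣ b ^ 2 + b + 1)
    (hd₂ : (p₂ : ℤ) ∣ b - 1) (hd₂' : (p₂ : ℤ) ∣ a ^ 2 + a + 1)
    (hd₃ : (p₃ : ℤ) ∣ b - a) (hd₃' : (p₃ : ℤ) ∣ a ^ 2 + a + 1)
    (hd₄ : (p₄ : ℤ) ∣ b - a ^ 2) (hd₄' : (p₄ : ℤ) ∣ a ^ 2 + a + 1) :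
    ∀ m n : ℕ, 1 < Int.gcd (a ^ m - b ^ n) ((p₁ : ℤ) * p₂ * p₃ * p₄) := by
  intro m n
  have hN : ((p₁ : ℤ) * p₂ * p₃ * p₄) ≠ 0 := by
    have := hp₁.pos; have := hp₂.pos; have := hp₃.pos; have := hp₄.pos
    positivity
  have step : ∀ p : ℕ, 1 < p → (p : ℤ) ∣ a ^ m - b ^ n →
      (p : ℤ) ∣ ((p₁ : ℤ) * p₂ * p₃ * p₄) →
      1 < Int.gcd (a ^ m - b ^ n) ((p₁ : ℤ) * p₂ * p₃ * p₄) := by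
    intro p hp h1 h2
    have hd : (p : ℤ) ∣ (Int.gcd (a ^ m - b ^ n) ((p₁ : ℤ) * p₂ * p₃ * p₄) : ℤ) :=
      Int.dvd_coe_gcd h1 h2
    have hd' : p ∣ Int.gcd (a ^ m - b ^ n) ((p₁ : ℤ) * p₂ * p₃ * p₄) :=
      Int.natCast_dvd_natCast.mp hd
    have hpos : 0 < Int.gcd (a ^ m - b ^ n) ((p₁ : ℤ) * p₂ * p₃ * p₄) := by
      rcases Nat.eq_zero_or_pos (Int.gcd (a ^ m - b ^ n) ((p₁ : ℤ) * p₂ * p₃ * p₄)) with h | h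
      · exact absurd (Int.gcd_eq_zero_iff.mp h).2 hN
      · exact h
    exact lt_of_lt_of_le hp (Nat.le_of_dvd hpos hd')
  by_cases h0 : n % 3 = 0
  · refine step p₁ (by omega) ?_ ⟨(p₂ : ℤ) * p₃ * p₄, by push_cast; ring⟩
    have := key_dvd p₁ b a 0 (by simpa using hd₁) hd₁' n m (by simpa using h0)
    exact dvd_sub_comm.mp this
  by_cases h1 : m % 3 = 0
  · exact step p₂ (by omega)
      (key_dvd p₂ a b 0 (by simpa using hd₂) hd₂' m n (by simpa using h1))
      ⟨(p₁ : ℤ) * p₃ * p₄, by push_cast; ring⟩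
  by_cases h2 : m % 3 = n % 3
  · exact step p₃ (by omega)
      (key_dvd p₃ a b 1 (by simpa using hd₃) hd₃' m n (by simpa using h2))
      ⟨(p₁ : ℤ) * p₂ * p₄, by push_cast; ring⟩
  · exact step p₄ (by omega)
      (key_dvd p₄ a b 2 hd₄ hd₄' m n (by omega))
      ⟨(p₁ : ℤ) * p₂ * p₃, by push_cast; ring⟩
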